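/- Assume the gain-ratio condition K_d^gsc / K_θ^gsc = K_d^msc / K_θ^msc. Along every solution x(t) = (ρ₁, ρ₂, ω₁, ω₂, v, P)(t) of the linearized closed-loop wind-turbine/grid model, the LaSalle function V satisfies, for all t ≥ 0, d/dt V(x(t)) = −(K_d^gsc/(K_θ^gsc C_dc)) (b_g ρ₁(t) + b_msc ρ₂(t))² − (κ/K_θ^msc) ω₂(t)² − (1/(K_θ^gsc k_g)) P(t)². In particular, if κ ≥ 0 then t ↦ V(x(t)) is nonincreasing. -/

import Mathlib

/-- A solution of the linearized closed-loop wind-turbine/grid model with state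
`x = (ρ₁, ρ₂, ω₁, ω₂, v, P)` (indices `0,…,5`). -/
def IsSolution (Kdg Kdm Kθg Kθm bg bmsc Jg Jwt ω0 ωdel Cdc Tg kg κ : ℝ)
    (x : ℝ → EuclideanSpace ℝ (Fin 6)) : Prop :=
  ∀ t : ℝ, 0 ≤ t →
    HasDerivAt (fun s => x s 0)
      (-(Kdg / Cdc) * (bg * x t 0 + bmsc * x t 1) - x t 2 + Kθg * x t 4) t ∧
    HasDerivAt (fun s => x s 1)
      (-(Kdm / Cdc) * (bg * x t 0 + bmsc * x t 1) - x t 3 + Kθm * x t 4) t ∧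
    HasDerivAt (fun s => x s 2) ((bg * x t 0 + x t 5) / (Jg * ω0)) t ∧
    HasDerivAt (fun s => x s 3) ((bmsc * x t 1 - κ * x t 3) / (Jwt * ωdel)) t ∧
    HasDerivAt (fun s => x s 4) (-(bg * x t 0 + bmsc * x t 1) / Cdc) t ∧
    HasDerivAt (fun s => x s 5) ((-kg * x t 2 - x t 5) / Tg) t

/-- The LaSalle function `V`. -/
noncomputable def lasalleV (Kθg Kθm bg bmsc Jg Jwt ω0 ωdel Cdc Tg kg : ℝ)
    (x : EuclideanSpace ℝ (Fin 6)) : ℝ :=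
  (1 / 2) * ((bg / Kθg) * (x 0) ^ 2 + (bmsc / Kθm) * (x 1) ^ 2 +
    (Jg * ω0 / Kθg) * (x 2) ^ 2 + (Jwt * ωdel / Kθm) * (x 3) ^ 2 +
    Cdc * (x 4) ^ 2 + (Tg / (Kθg * kg)) * (x 5) ^ 2)

/-- **LaSalle dissipation identity.** Under the gain-ratio condition
`K_d^gsc / K_θ^gsc = K_d^msc / K_θ^msc`, along every solution of the linearized
model the LaSalle function satisfies
`d/dt V(x(t)) = −(K_d^gsc/(K_θ^gsc C_dc)) (b_g ρ₁ + b_msc ρ₂)² − (κ/K_θ^msc) ω₂² −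
(1/(K_θ^gsc k_g)) P²`; in particular, if `κ ≥ 0` then `t ↦ V(x(t))` is
nonincreasing on `[0, ∞)`. -/
theorem lasalleV_dissipation
    (bg bmsc Jg Jwt ω0 ωdel Cdc Tg kg Kθg Kθm Kdg Kdm Kωr Kβ Kp : ℝ)
    (hbg : 0 < bg) (hbmsc : 0 < bmsc) (hJg : 0 < Jg) (hJwt : 0 < Jwt)
    (hω0 : 0 < ω0) (hωdel : 0 < ωdel) (hCdc : 0 < Cdc) (hTg : 0 < Tg)
    (hkg : 0 < kg) (hKθg : 0 < Kθg) (hKθm : 0 < Kθm)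
    (hKdg : 0 < Kdg) (hKdm : 0 < Kdm)
    (hratio : Kdg / Kθg = Kdm / Kθm)
    (x : ℝ → EuclideanSpace ℝ (Fin 6))
    (hx : IsSolution Kdg Kdm Kθg Kθm bg bmsc Jg Jwt ω0 ωdel Cdc Tg kg
      (Kωr + Kβ * Kp) x) :
    (∀ t : ℝ, 0 ≤ t →
      HasDerivAt (fun s => lasalleV Kθg Kθm bg bmsc Jg Jwt ω0 ωdel Cdc Tg kg (x s))
        (-(Kdg / (Kθg * Cdc)) * (bg * x t 0 + bmsc * x t 1) ^ 2 -
          ((Kωr + Kβ * Kp) / Kθm) * (x t 3) ^ 2 -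
          (1 / (Kθg * kg)) * (x t 5) ^ 2) t) ∧
    (0 ≤ Kωr + Kβ * Kp →
      AntitoneOn (fun t => lasalleV Kθg Kθm bg bmsc Jg Jwt ω0 ωdel Cdc Tg kg (x t))
        (Set.Ici (0 : ℝ))) := by
  have hr : Kdg * Kθm = Kdm * Kθg := by
    field_simp at hratio; linarith
  have key : ∀ t : ℝ, 0 ≤ t →
      HasDerivAt (fun s => lasalleV Kθg Kθm bg bmsc Jg Jwt ω0 ωdel Cdc Tg kg (x s))
        (-(Kdg / (Kθg * Cdc)) * (bg * x t 0 + bmsc * x t 1) ^ 2 -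
          ((Kωr + Kβ * Kp) / Kθm) * (x t 3) ^ 2 -
          (1 / (Kθg * kg)) * (x t 5) ^ 2) t := by
    intro t ht
    obtain ⟨h0, h1, h2, h3, h4, h5⟩ := hx t ht
    have H := ((((((h0.pow 2).const_mul (bg / Kθg)).add
        ((h1.pow 2).const_mul (bmsc / Kθm))).add
        ((h2.pow 2).const_mul (Jg * ω0 / Kθg))).add
        ((h3.pow 2).const_mul (Jwt * ωdel / Kθm))).add
        ((h4.pow 2).const_mul Cdc)).add
        ((h5.pow 2).const_mul (Tg / (Kθg * kg)))
    have H2 := H.const_mul ((1 : ℝ) / 2)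
    simp only [lasalleV]
    refine H2.congr_deriv ?_
    have hKθg' := hKθg.ne'
    have hKθm' := hKθm.ne'
    have hCdc' := hCdc.ne'
    have hJg' := hJg.ne'
    have hJwt' := hJwt.ne'
    have hω0' := hω0.ne'
    have hωdel' := hωdel.ne'
    have hTg' := hTg.ne'
    have hkg' := hkg.ne'
    have hKdm' : Kdm = Kdg * Kθm / Kθg := by
      field_simp
      linarith [hr]
    rw [hKdm']
    field_simp
    ring
  refine ⟨key, ?_⟩
  intro hκ
  have hderiv : ∀ t ∈ Set.Ici (0:ℝ), DifferentiableAt ℝ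
      (fun s => lasalleV Kθg Kθm bg bmsc Jg Jwt ω0 ωdel Cdc Tg kg (x s)) t :=
    fun t ht => (key t ht).differentiableAt
  apply antitoneOn_of_deriv_nonpos (convex_Ici 0)
  · exact fun t ht => (hderiv t ht).continuousAt.continuousWithinAt
  · rw [interior_Ici]
    exact fun t ht => (hderiv t (Set.mem_Ici.mpr (le_of_lt ht))).differentiableWithinAt
  · rw [interior_Ici]
    intro t ht
    rw [(key t (le_of_lt ht)).deriv]
    have h1 : 0 ≤ Kdg / (Kθg * Cdc) := le_of_lt (div_pos hKdg (mul_pos hKθg hCdc))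
    have h2 : 0 ≤ (Kωr + Kβ * Kp) / Kθm := div_nonneg hκ hKθm.le
    have h3 : 0 ≤ 1 / (Kθg * kg) := le_of_lt (div_pos one_pos (mul_pos hKθg hkg))
    nlinarith [sq_nonneg (bg * x t 0 + bmsc * x t 1), sq_nonneg (x t 3), sq_nonneg (x t 5),
      mul_nonneg h1 (sq_nonneg (bg * x t 0 + bmsc * x t 1)),
      mul_nonneg h2 (sq_nonneg (x t 3)), mul_nonneg h3 (sq_nonneg (x t 5))]
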